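/- (Lemma 1) If Δ is an admissible kernel and π is a κ-greedy policy, then v_π k s ≥ g k s for all k : ℕ and s : S; i.e., the probability of reaching the accepting set F within the remaining k steps under the greedy policy π_C is bounded below by the worst-case value function g. -/

import Mathlib

open Finset
open scoped Classical

/-- The feasible set of transition-probability vectors at state `s` under action `a`. -/
def Feas {S A : Type*} [Fintype S] (Δmin Δmax : S → A → S → ℝ) (s : S) (a : A) :
    Set (S → ℝ) :=
  {x | (∀ s', Δmin s a s' ≤ x s' ∧ x s' ≤ Δmax s a s') ∧ ∑ s', x s' = 1}

/-- Worst-case one-step value of `h` over the feasible set. -/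
noncomputable def kappaOf {S A : Type*} [Fintype S] (Δmin Δmax : S → A → S → ℝ)
    (h : S → ℝ) (s : S) (a : A) : ℝ :=
  sInf ((fun x : S → ℝ => ∑ s', h s' * x s') '' Feas Δmin Δmax s a)

/-- The worst-case satisfaction lower bound `g`, indexed by remaining time. -/
noncomputable def gval {S A : Type*} [Fintype S] [Fintype A] [Nonempty A]
    (Δmin Δmax : S → A → S → ℝ) (F : Finset S) : ℕ → S → ℝ
  | 0 => fun s => if s ∈ F then 1 else 0
  | (k+1) => fun s =>
      Finset.univ.sup' Finset.univ_nonempty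
        (fun a : A => kappaOf Δmin Δmax (gval Δmin Δmax F k) s a)

/-- `κ k s a`: worst-case optimization value at remaining time `k`. -/
noncomputable def kappa {S A : Type*} [Fintype S] [Fintype A] [Nonempty A]
    (Δmin Δmax : S → A → S → ℝ) (F : Finset S) (k : ℕ) (s : S) (a : A) : ℝ :=
  kappaOf Δmin Δmax (gval Δmin Δmax F k) s a

/-- A transition kernel is admissible if it lies in the feasible set everywhere. -/
def Admissible {S A : Type*} [Fintype S] (Δmin Δmax Δ : S → A → S → ℝ) : Prop :=
  ∀ s a, Δ s a ∈ Feas Δmin Δmax s a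

/-- Success probability of reaching `F` within the remaining time under policy `π`. -/
noncomputable def vpi {S A : Type*} [Fintype S] (Δ : S → A → S → ℝ) (F : Finset S)
    (π : ℕ → S → A) : ℕ → S → ℝ
  | 0 => fun s => if s ∈ F then 1 else 0
  | (k+1) => fun s => ∑ s', Δ s (π (k+1) s) s' * vpi Δ F π k s'

/-- A policy is κ-greedy if its action attains the max in the recursion for `g`. -/
def Greedy {S A : Type*} [Fintype S] [Fintype A] [Nonempty A]
    (Δmin Δmax : S → A → S → ℝ) (F : Finset S) (π : ℕ → S → A) : Prop :=
  ∀ k s, kappa Δmin Δmax F k s (π (k+1) s) = gval Δmin Δmax F (k+1) s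

/-- `Act Δmin Δmax F p k s` is the pruned action set at remaining time `k+1`
(written `Act (k+1) s` in the paper): actions whose every possibly-reached
successor `s'` (i.e. `Δmax s a s' > 0`) satisfies `g k s' ≥ p`. -/
def Act {S A : Type*} [Fintype S] [Fintype A] [Nonempty A]
    (Δmin Δmax : S → A → S → ℝ) (F : Finset S) (p : ℝ) (k : ℕ) (s : S) : Set A :=
  {a | ∀ s', 0 < Δmax s a s' → p ≤ gval Δmin Δmax F k s'}

lemma gval_nonneg {S A : Type*} [Fintype S] [Fintype A] [Nonempty S] [Nonempty A]
    (Δmin Δmax : S → A → S → ℝ)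
    (hbounds : ∀ s a s', 0 ≤ Δmin s a s' ∧ Δmin s a s' ≤ Δmax s a s')
    (F : Finset S) : ∀ k s, 0 ≤ gval Δmin Δmax F k s := by
  intro k
  induction k with
  | zero => intro s; simp [gval]; positivity
  | succ k ih =>
    intro s
    have ha : ∀ a : A, 0 ≤ kappaOf Δmin Δmax (gval Δmin Δmax F k) s a := by
      intro a
      apply Real.sInf_nonneg
      rintro y ⟨x, hx, rfl⟩
      apply Finset.sum_nonneg
      intro s' _
      exact mul_nonneg (ih s') (le_trans (hbounds s a s').1 (hx.1 s').1)
    calc (0:ℝ) ≤ kappaOf Δmin Δmax (gval Δmin Δmax F k) s (Classical.arbitrary A) :=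
          ha _
      _ ≤ _ := Finset.le_sup' _ (Finset.mem_univ _)

/-- Lemma 1: under an admissible kernel, a κ-greedy policy
reaches the accepting set within the remaining `k` steps with probability
at least the worst-case value `g k s`. -/
theorem greedy_policy_dominates_g {S A : Type*} [Fintype S] [Fintype A]
    [Nonempty S] [Nonempty A]
    (Δmin Δmax : S → A → S → ℝ)
    (hbounds : ∀ s a s', 0 ≤ Δmin s a s' ∧ Δmin s a s' ≤ Δmax s a s')
    (F : Finset S) (Δ : S → A → S → ℝ) (hΔ : Admissible Δmin Δmax Δ)
    (π : ℕ → S → A) (hπ : Greedy Δmin Δmax F π) :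
    ∀ (k : ℕ) (s : S), gval Δmin Δmax F k s ≤ vpi Δ F π k s := by
  intro k
  induction k with
  | zero => intro s; simp [gval, vpi]
  | succ k ih =>
    intro s
    set a := π (k+1) s with ha
    have hg : gval Δmin Δmax F (k+1) s = kappa Δmin Δmax F k s a := (hπ k s).symm
    have hΔnn : ∀ s', 0 ≤ Δ s a s' := fun s' =>
      le_trans (hbounds s a s').1 ((hΔ s a).1 s').1
    have hbdd : BddBelow ((fun x : S → ℝ => ∑ s', gval Δmin Δmax F k s' * x s') ''
        Feas Δmin Δmax s a) := by
      refine ⟨0, ?_⟩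
      rintro y ⟨x, hx, rfl⟩
      apply Finset.sum_nonneg
      intro s' _
      exact mul_nonneg (gval_nonneg Δmin Δmax hbounds F k s')
        (le_trans (hbounds s a s').1 (hx.1 s').1)
    have h1 : kappa Δmin Δmax F k s a ≤ ∑ s', gval Δmin Δmax F k s' * Δ s a s' :=
      csInf_le hbdd ⟨Δ s a, hΔ s a, rfl⟩
    have h2 : ∑ s', gval Δmin Δmax F k s' * Δ s a s' ≤
        ∑ s', Δ s a s' * vpi Δ F π k s' := by
      apply Finset.sum_le_sum
      intro s' _
      rw [mul_comm]
      exact mul_le_mul_of_nonneg_left (ih s') (hΔnn s')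
    calc gval Δmin Δmax F (k+1) s = kappa Δmin Δmax F k s a := hg
      _ ≤ _ := le_trans h1 h2
      _ = vpi Δ F π (k+1) s := by simp [vpi, ha]
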